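/- Let 0 < κ₁ < κ₂, 0 < γ < 1, and s > 0. Define F₃(m₁) = ½(−κ₁ + (m₁/(2κ₁) + (1−m₁)/(κ₁+κ₂))⁻¹)·s² + m₁ + γ(1−m₁) for m₁ ∈ [0,1], and set m₁⁽³⁾(s) = −2κ₁/(κ₂−κ₁) + s·√(κ₁(κ₁+κ₂)/((1−γ)(κ₂−κ₁))). If ρ₂ ≤ s ≤ ρ₃, where ρ₂ = 2√(κ₁(1−γ)/(κ₂²−κ₁²)) and ρ₃ = √((1−γ)(κ₁+κ₂)/(κ₁(κ₂−κ₁))), then for every m₁ ∈ [0,1] one has F₃(m₁) ≥ QF₃(s) = −½κ₁s² + 2s·√(κ₁(κ₁+κ₂)(1−γ)/(κ₂−κ₁)) + (γ(κ₁+κ₂) − 2κ₁)/(κ₂−κ₁), with equality at m₁ = m₁⁽³⁾(s). -/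

import Mathlib

/-- For `0 < κ₁ < κ₂`, `0 < γ < 1`, `s > 0` with `ρ₂ ≤ s ≤ ρ₃`, the
energy-plus-cost `F₃(m₁)` of the laminate L(12,1) is bounded below on `[0,1]` by
`QF₃(s)`, with equality at `m₁ = m₁⁽³⁾(s)`. -/
theorem stmt_1 (κ₁ κ₂ γ s : ℝ) (hκ₁ : 0 < κ₁) (hκ : κ₁ < κ₂) (hγ0 : 0 < γ) (hγ1 : γ < 1)
    (hs : 0 < s)
    (hρ₂ : 2 * Real.sqrt (κ₁ * (1 - γ) / (κ₂ ^ 2 - κ₁ ^ 2)) ≤ s)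
    (hρ₃ : s ≤ Real.sqrt ((1 - γ) * (κ₁ + κ₂) / (κ₁ * (κ₂ - κ₁)))) :
    let F₃ : ℝ → ℝ := fun m₁ =>
      (1 / 2) * (-κ₁ + (m₁ / (2 * κ₁) + (1 - m₁) / (κ₁ + κ₂))⁻¹) * s ^ 2
        + m₁ + γ * (1 - m₁)
    let QF₃ : ℝ :=
      -(1 / 2) * κ₁ * s ^ 2 + 2 * s * Real.sqrt (κ₁ * (κ₁ + κ₂) * (1 - γ) / (κ₂ - κ₁))
        + (γ * (κ₁ + κ₂) - 2 * κ₁) / (κ₂ - κ₁)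
    let m₁3 : ℝ :=
      -(2 * κ₁) / (κ₂ - κ₁) + s * Real.sqrt (κ₁ * (κ₁ + κ₂) / ((1 - γ) * (κ₂ - κ₁)))
    (∀ m₁ : ℝ, 0 ≤ m₁ → m₁ ≤ 1 → F₃ m₁ ≥ QF₃) ∧ F₃ m₁3 = QF₃ := by
  intro F₃ QF₃ m₁3
  have hκ₂ : 0 < κ₂ := lt_trans hκ₁ hκ
  have hd : 0 < κ₂ - κ₁ := sub_pos.mpr hκ
  have hsum : 0 < κ₁ + κ₂ := by linarith
  have h1γ : 0 < 1 - γ := by linarith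
  have hr0 : 0 ≤ Real.sqrt (κ₁ * (κ₁ + κ₂) * (1 - γ) / (κ₂ - κ₁)) := Real.sqrt_nonneg _
  have hq0 : 0 ≤ Real.sqrt (κ₁ * (κ₁ + κ₂) / ((1 - γ) * (κ₂ - κ₁))) := Real.sqrt_nonneg _
  have hr2 : (Real.sqrt (κ₁ * (κ₁ + κ₂) * (1 - γ) / (κ₂ - κ₁))) ^ 2
      = κ₁ * (κ₁ + κ₂) * (1 - γ) / (κ₂ - κ₁) := Real.sq_sqrt (by positivity)
  have hq2 : (Real.sqrt (κ₁ * (κ₁ + κ₂) / ((1 - γ) * (κ₂ - κ₁)))) ^ 2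
      = κ₁ * (κ₁ + κ₂) / ((1 - γ) * (κ₂ - κ₁)) := Real.sq_sqrt (by positivity)
  have hr2' : (Real.sqrt (κ₁ * (κ₁ + κ₂) * (1 - γ) / (κ₂ - κ₁))) ^ 2 * (κ₂ - κ₁)
      = κ₁ * (κ₁ + κ₂) * (1 - γ) := by
    rw [hr2]; field_simp
  have hq2' : (Real.sqrt (κ₁ * (κ₁ + κ₂) / ((1 - γ) * (κ₂ - κ₁)))) ^ 2
      * ((1 - γ) * (κ₂ - κ₁)) = κ₁ * (κ₁ + κ₂) := by
    rw [hq2]; field_simp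
  have hrq : Real.sqrt (κ₁ * (κ₁ + κ₂) * (1 - γ) / (κ₂ - κ₁))
      = (1 - γ) * Real.sqrt (κ₁ * (κ₁ + κ₂) / ((1 - γ) * (κ₂ - κ₁))) := by
    rw [show κ₁ * (κ₁ + κ₂) * (1 - γ) / (κ₂ - κ₁)
        = ((1 - γ) * Real.sqrt (κ₁ * (κ₁ + κ₂) / ((1 - γ) * (κ₂ - κ₁)))) ^ 2 by
      rw [mul_pow, hq2]; field_simp]
    exact Real.sqrt_sq (mul_nonneg h1γ.le hq0)
  have key : ∀ m₁ : ℝ, 2 * κ₁ + m₁ * (κ₂ - κ₁) ≠ 0 →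
      F₃ m₁ - QF₃ = (κ₁ * (κ₁ + κ₂) * s ^ 2 * (κ₂ - κ₁)
        + (1 - γ) * (2 * κ₁ + m₁ * (κ₂ - κ₁)) ^ 2
        - 2 * s * Real.sqrt (κ₁ * (κ₁ + κ₂) * (1 - γ) / (κ₂ - κ₁))
            * (2 * κ₁ + m₁ * (κ₂ - κ₁)) * (κ₂ - κ₁))
        / ((2 * κ₁ + m₁ * (κ₂ - κ₁)) * (κ₂ - κ₁)) := by
    intro m₁ ht
    simp only [F₃, QF₃]
    rw [show m₁ / (2 * κ₁) + (1 - m₁) / (κ₁ + κ₂)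
        = (2 * κ₁ + m₁ * (κ₂ - κ₁)) / (2 * κ₁ * (κ₁ + κ₂)) by
      field_simp; ring]
    rw [inv_div]
    field_simp
    ring
  constructor
  · intro m₁ hm0 hm1
    have ht : 0 < 2 * κ₁ + m₁ * (κ₂ - κ₁) := by nlinarith
    rw [ge_iff_le, ← sub_nonneg, key m₁ ht.ne']
    apply div_nonneg _ (by positivity)
    have hN : (1 - γ) * (κ₁ * (κ₁ + κ₂) * s ^ 2 * (κ₂ - κ₁)
        + (1 - γ) * (2 * κ₁ + m₁ * (κ₂ - κ₁)) ^ 2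
        - 2 * s * Real.sqrt (κ₁ * (κ₁ + κ₂) * (1 - γ) / (κ₂ - κ₁))
            * (2 * κ₁ + m₁ * (κ₂ - κ₁)) * (κ₂ - κ₁))
        = (s * Real.sqrt (κ₁ * (κ₁ + κ₂) * (1 - γ) / (κ₂ - κ₁)) * (κ₂ - κ₁)
            - (1 - γ) * (2 * κ₁ + m₁ * (κ₂ - κ₁))) ^ 2 := by
      linear_combination (-(s ^ 2 * (κ₂ - κ₁))) * hr2'
    have h0 : (1 - γ) * 0 ≤ (1 - γ) * (κ₁ * (κ₁ + κ₂) * s ^ 2 * (κ₂ - κ₁)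
        + (1 - γ) * (2 * κ₁ + m₁ * (κ₂ - κ₁)) ^ 2
        - 2 * s * Real.sqrt (κ₁ * (κ₁ + κ₂) * (1 - γ) / (κ₂ - κ₁))
            * (2 * κ₁ + m₁ * (κ₂ - κ₁)) * (κ₂ - κ₁)) := by
      rw [mul_zero, hN]; exact sq_nonneg _
    exact (mul_le_mul_iff_right₀ h1γ).mp h0
  · have hq_pos : 0 < Real.sqrt (κ₁ * (κ₁ + κ₂) / ((1 - γ) * (κ₂ - κ₁))) :=
      Real.sqrt_pos.mpr (by positivity)
    have htm : 2 * κ₁ + m₁3 * (κ₂ - κ₁)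
        = s * Real.sqrt (κ₁ * (κ₁ + κ₂) / ((1 - γ) * (κ₂ - κ₁))) * (κ₂ - κ₁) := by
      simp only [m₁3]
      field_simp
      ring
    have ht3 : (2 * κ₁ + m₁3 * (κ₂ - κ₁)) ≠ 0 := by
      rw [htm]; positivity
    have hk := key m₁3 ht3
    have hnum : κ₁ * (κ₁ + κ₂) * s ^ 2 * (κ₂ - κ₁)
        + (1 - γ) * (2 * κ₁ + m₁3 * (κ₂ - κ₁)) ^ 2
        - 2 * s * Real.sqrt (κ₁ * (κ₁ + κ₂) * (1 - γ) / (κ₂ - κ₁))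
            * (2 * κ₁ + m₁3 * (κ₂ - κ₁)) * (κ₂ - κ₁) = 0 := by
      rw [htm, hrq]
      linear_combination (-(s ^ 2 * (κ₂ - κ₁))) * hq2'
    rw [hnum] at hk
    simp at hk
    linarith
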